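/- arXiv:2508.12237 — 6 statements merged into one kernel-verified Lean document; each statement's English description precedes it below -/
import Mathlib

section
/- Let (R,𝔪,k) be a commutative noetherian local ring with depth R = 0 and R ≠ k (i.e., 𝔪 ≠ 0). If M is an R-module belonging to Add{Ω_R^n k | n ≥ 0}, then Soc R ⊆ Ann_R M. -/
/-!
Common definitions for formalizing (A)-, (B)-properties and (C)-relations
(Kosaka, "Characterizing regular local rings via analogues of (*)-properties").
-/

universe u v w

open IsLocalRing DirectSum TensorProduct

noncomputable section

/-- A bundled (possibly infinitely generated) module over the ring `R`. -/
structure ModuleAux (R : Type u) [CommRing R] where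
  carrier : Type v
  [isAddCommGroup : AddCommGroup carrier]
  [isModule : Module R carrier]

attribute [instance] ModuleAux.isAddCommGroup ModuleAux.isModule

/-- `depth R = 0` : every element of the maximal ideal is a zerodivisor. -/
def DepthZero (R : Type u) [CommRing R] [IsLocalRing R] : Prop :=
  ∀ x ∈ maximalIdeal R, x ∉ nonZeroDivisors R

/-- `depth R > 0` : the maximal ideal contains an `R`-regular element. -/
def DepthPos (R : Type u) [CommRing R] [IsLocalRing R] : Prop :=
  ∃ x ∈ maximalIdeal R, x ∈ nonZeroDivisors R

/-- The socle `Soc R = {r : R | 𝔪 r = 0}` of a local ring, as an ideal. -/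
def Socle (R : Type u) [CommRing R] [IsLocalRing R] : Ideal R :=
  (maximalIdeal R).annihilator

theorem span_singleton_ne_top {R : Type u} [CommRing R] [IsLocalRing R] {x : R}
    (hx : x ∈ maximalIdeal R) : Ideal.span {x} ≠ ⊤ := by
  intro h
  have hle : Ideal.span {x} ≤ maximalIdeal R := by
    rw [Ideal.span_le, Set.singleton_subset_iff]; exact hx
  rw [h] at hle
  exact (maximalIdeal.isMaximal R).ne_top (top_le_iff.mp hle)

/-- `R/xR` is a local ring whenever `x ∈ 𝔪`. -/
def quotIsLocalRing (R : Type u) [CommRing R] [IsLocalRing R] {x : R}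
    (hx : x ∈ maximalIdeal R) : IsLocalRing (R ⧸ Ideal.span {x}) :=
  letI := Ideal.Quotient.nontrivial_iff.mpr (span_singleton_ne_top hx)
  IsLocalRing.of_surjective' (Ideal.Quotient.mk _) Ideal.Quotient.mk_surjective

/-- A non-maximal prime ideal of a local ring. -/
def IsNonMaximalPrime (R : Type u) [CommRing R] [IsLocalRing R] (p : Ideal R) : Prop :=
  p.IsPrime ∧ p ≠ maximalIdeal R

/-- A property of (possibly infinitely generated) modules over noetherian local rings. -/
def ModuleProperty :=
  ∀ (R : Type u) [CommRing R] [IsNoetherianRing R] [IsLocalRing R]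
    (M : Type v) [AddCommGroup M] [Module R M], Prop

namespace ModuleProperty

/-- `M/xM` satisfies `P` as a module over `R/xR`. -/
def QuotSat (P : ModuleProperty.{u, v}) (R : Type u) [CommRing R] [IsNoetherianRing R]
    [IsLocalRing R] (M : Type v) [AddCommGroup M] [Module R M]
    {x : R} (hx : x ∈ maximalIdeal R) : Prop :=
  letI := quotIsLocalRing R hx
  P (R ⧸ Ideal.span {x}) (M ⧸ (Ideal.span {x} • ⊤ : Submodule R M))

/-- Condition (P1) : `P` descends along quotients by regular elements in `𝔪 \ 𝔪²`. -/
def SatP1 (P : ModuleProperty.{u, v}) : Prop :=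
  ∀ (R : Type u) [CommRing R] [IsNoetherianRing R] [IsLocalRing R]
    (M : Type v) [AddCommGroup M] [Module R M],
    P R M → ∀ (x : R) (hx : x ∈ maximalIdeal R), x ∉ maximalIdeal R ^ 2 →
      x ∈ nonZeroDivisors R → P.QuotSat R M hx

/-- Condition (P1') : if `depth R > 0` then, away from finitely many non-maximal primes,
`P` descends along quotients by regular elements in `𝔪 \ 𝔪²`. -/
def SatP1' (P : ModuleProperty.{u, v}) : Prop :=
  ∀ (R : Type u) [CommRing R] [IsNoetherianRing R] [IsLocalRing R]
    (M : Type v) [AddCommGroup M] [Module R M],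
    DepthPos R → P R M →
      ∃ s : Finset (Ideal R), (∀ p ∈ s, IsNonMaximalPrime R p) ∧
        ∀ (x : R) (hx : x ∈ maximalIdeal R), x ∉ maximalIdeal R ^ 2 →
          (∀ p ∈ s, x ∉ p) → x ∈ nonZeroDivisors R → P.QuotSat R M hx

/-- Condition (P2) : if `depth R = 0` and `M` satisfies `P`, then `Soc R ⊄ Ann_R M`. -/
def SatP2 (P : ModuleProperty.{u, v}) : Prop :=
  ∀ (R : Type u) [CommRing R] [IsNoetherianRing R] [IsLocalRing R]
    (M : Type v) [AddCommGroup M] [Module R M],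
    DepthZero R → P R M → ¬ Socle R ≤ Module.annihilator R M

/-- Condition (P3) : if `depth R = 0`, `M` satisfies `P` and `R ≠ k`,
then `Soc R ⊆ Ann_R M`. -/
def SatP3 (P : ModuleProperty.{u, v}) : Prop :=
  ∀ (R : Type u) [CommRing R] [IsNoetherianRing R] [IsLocalRing R]
    (M : Type v) [AddCommGroup M] [Module R M],
    DepthZero R → P R M → maximalIdeal R ≠ ⊥ → Socle R ≤ Module.annihilator R M

/-- Condition (*1) : `P` descends along quotients by `R`-regular elements. -/
def SatStar1 (P : ModuleProperty.{u, v}) : Prop :=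
  ∀ (R : Type u) [CommRing R] [IsNoetherianRing R] [IsLocalRing R]
    (M : Type v) [AddCommGroup M] [Module R M],
    P R M → ∀ (x : R) (hx : x ∈ maximalIdeal R), x ∈ nonZeroDivisors R → P.QuotSat R M hx

/-- Condition (*2) : if `depth R = 0` and `M` satisfies `P` then `Ann_R M = 0`. -/
def SatStar2 (P : ModuleProperty.{u, v}) : Prop :=
  ∀ (R : Type u) [CommRing R] [IsNoetherianRing R] [IsLocalRing R]
    (M : Type v) [AddCommGroup M] [Module R M],
    DepthZero R → P R M → Module.annihilator R M = ⊥

end ModuleProperty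

/-- An (A)-property: a property satisfying (P1) and (P2). -/
def IsAProperty (P : ModuleProperty.{u, v}) : Prop := P.SatP1 ∧ P.SatP2

/-- An (A')-property: a property satisfying (P1') and (P2). -/
def IsA'Property (P : ModuleProperty.{u, v}) : Prop := P.SatP1' ∧ P.SatP2

/-- A (B)-property: a property satisfying (P1) and (P3). -/
def IsBProperty (P : ModuleProperty.{u, v}) : Prop := P.SatP1 ∧ P.SatP3

/-- A (B')-property: a property satisfying (P1') and (P3). -/
def IsB'Property (P : ModuleProperty.{u, v}) : Prop := P.SatP1' ∧ P.SatP3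

/-- A (*)-property (for not necessarily finitely generated modules). -/
def IsStarProperty (P : ModuleProperty.{u, v}) : Prop := P.SatStar1 ∧ P.SatStar2

/-- `M ∈ 𝒫_{A'}(R)` : `M` satisfies some (A')-property over `R`. -/
def MemPA' (R : Type u) [CommRing R] [IsNoetherianRing R] [IsLocalRing R]
    (M : Type v) [AddCommGroup M] [Module R M] : Prop :=
  ∃ P : ModuleProperty.{u, v}, IsA'Property P ∧ P R M

/-- `M ∈ 𝒫_{B'}(R)` : `M` satisfies some (B')-property over `R`. -/
def MemPB' (R : Type u) [CommRing R] [IsNoetherianRing R] [IsLocalRing R]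
    (M : Type v) [AddCommGroup M] [Module R M] : Prop :=
  ∃ P : ModuleProperty.{u, v}, IsB'Property P ∧ P R M

/-- `M` satisfies some (*)-property over `R`. -/
def MemPStar (R : Type u) [CommRing R] [IsNoetherianRing R] [IsLocalRing R]
    (M : Type v) [AddCommGroup M] [Module R M] : Prop :=
  ∃ P : ModuleProperty.{u, v}, IsStarProperty P ∧ P R M

/-- A relation of (possibly infinitely generated) modules over noetherian local rings. -/
def ModuleRelation :=
  ∀ (R : Type u) [CommRing R] [IsNoetherianRing R] [IsLocalRing R]
    (M : Type v) [AddCommGroup M] [Module R M]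
    (N : Type v) [AddCommGroup N] [Module R N], Prop

namespace ModuleRelation

/-- `M/xM ≤_{R/xR} N/xN`. -/
def QuotRel (rel : ModuleRelation.{u, v}) (R : Type u) [CommRing R] [IsNoetherianRing R]
    [IsLocalRing R] (M : Type v) [AddCommGroup M] [Module R M]
    (N : Type v) [AddCommGroup N] [Module R N] {x : R} (hx : x ∈ maximalIdeal R) : Prop :=
  letI := quotIsLocalRing R hx
  rel (R ⧸ Ideal.span {x}) (M ⧸ (Ideal.span {x} • ⊤ : Submodule R M))
    (N ⧸ (Ideal.span {x} • ⊤ : Submodule R N))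

/-- Condition (R1). -/
def SatR1 (rel : ModuleRelation.{u, v}) : Prop :=
  ∀ (R : Type u) [CommRing R] [IsNoetherianRing R] [IsLocalRing R]
    (M : Type v) [AddCommGroup M] [Module R M] (N : Type v) [AddCommGroup N] [Module R N],
    rel R M N → ∀ (x : R) (hx : x ∈ maximalIdeal R), x ∉ maximalIdeal R ^ 2 →
      x ∈ nonZeroDivisors R → rel.QuotRel R M N hx

/-- Condition (R1'). -/
def SatR1' (rel : ModuleRelation.{u, v}) : Prop :=
  ∀ (R : Type u) [CommRing R] [IsNoetherianRing R] [IsLocalRing R]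
    (M : Type v) [AddCommGroup M] [Module R M] (N : Type v) [AddCommGroup N] [Module R N],
    DepthPos R → rel R M N →
      ∃ s : Finset (Ideal R), (∀ p ∈ s, IsNonMaximalPrime R p) ∧
        ∀ (x : R) (hx : x ∈ maximalIdeal R), x ∉ maximalIdeal R ^ 2 →
          (∀ p ∈ s, x ∉ p) → x ∈ nonZeroDivisors R → rel.QuotRel R M N hx

/-- Condition (R2). -/
def SatR2 (rel : ModuleRelation.{u, v}) : Prop :=
  ∀ (R : Type u) [CommRing R] [IsNoetherianRing R] [IsLocalRing R]
    (M : Type v) [AddCommGroup M] [Module R M] (N : Type v) [AddCommGroup N] [Module R N],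
    DepthZero R → rel R M N → Module.annihilator R M ≤ Module.annihilator R N

end ModuleRelation

/-- A (C)-relation: a relation satisfying (R1) and (R2). -/
def IsCRelation (rel : ModuleRelation.{u, v}) : Prop := rel.SatR1 ∧ rel.SatR2

/-- A (C')-relation: a relation satisfying (R1') and (R2). -/
def IsC'Relation (rel : ModuleRelation.{u, v}) : Prop := rel.SatR1' ∧ rel.SatR2

/-- `M ≼_R N` : `M ≤_R N` for some (C)-relation `≤`. -/
def Preceq (R : Type u) [CommRing R] [IsNoetherianRing R] [IsLocalRing R]
    (M : Type v) [AddCommGroup M] [Module R M]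
    (N : Type v) [AddCommGroup N] [Module R N] : Prop :=
  ∃ rel : ModuleRelation.{u, v}, IsCRelation rel ∧ rel R M N

/-- `M ≼'_R N` : `M ≤_R N` for some (C')-relation `≤`. -/
def Preceq' (R : Type u) [CommRing R] [IsNoetherianRing R] [IsLocalRing R]
    (M : Type v) [AddCommGroup M] [Module R M]
    (N : Type v) [AddCommGroup N] [Module R N] : Prop :=
  ∃ rel : ModuleRelation.{u, v}, IsC'Relation rel ∧ rel R M N

/-- A noetherian local ring is regular if its maximal ideal can be generated by
`dim R` elements. -/
def IsRegularLocal (R : Type u) [CommRing R] [IsLocalRing R] : Prop :=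
  ∃ (n : ℕ) (x : Fin n → R), Ideal.span (Set.range x) = maximalIdeal R ∧
    (n : WithBot (WithTop ℕ)) = ringKrullDim R

/-- `M` is (isomorphic to) the `n`-th syzygy `Ω_R^n k` of the residue field `k` in its
minimal free resolution: `Ω^0 k = k`, and `Ω^{n+1} k` is the kernel of a surjection
`F → Ω^n k` with `F` finitely generated free and the kernel contained in `𝔪 F`. -/
def IsSyzygy (R : Type u) [CommRing R] [IsLocalRing R] :
    ℕ → (M : Type v) → [AddCommGroup M] → [Module R M] → Prop
  | 0, M, _, _ => Nonempty (M ≃ₗ[R] ResidueField R)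
  | n + 1, M, _, _ =>
      ∃ (F : ModuleAux.{u, v} R) (S : Submodule R F.carrier),
        Module.Free R F.carrier ∧ Module.Finite R F.carrier ∧
        S ≤ maximalIdeal R • (⊤ : Submodule R F.carrier) ∧
        IsSyzygy R n (F.carrier ⧸ S) ∧ Nonempty (M ≃ₗ[R] S)

/-- `Y` is a direct summand of a direct sum of modules from the family `X`. -/
def IsAddIn (R : Type u) [CommRing R] (Y : Type v) [AddCommGroup Y] [Module R Y]
    {ι : Type w} (X : ι → ModuleAux.{u, v} R) : Prop :=
  ∃ (κ : Type v) (g : κ → ι)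
    (s : Y →ₗ[R] ⨁ k : κ, (X (g k)).carrier)
    (r : (⨁ k : κ, (X (g k)).carrier) →ₗ[R] Y), r ∘ₗ s = LinearMap.id

/-- `M ∈ Add {Ω_R^n k ∣ n ≥ 0}`. -/
def InAddSyzygies (R : Type u) [CommRing R] [IsLocalRing R]
    (M : Type v) [AddCommGroup M] [Module R M] : Prop :=
  ∃ (ι : Type v) (n : ι → ℕ) (Z : ι → ModuleAux.{u, v} R),
    (∀ i, IsSyzygy R (n i) (Z i).carrier) ∧ IsAddIn R M Z

/-- `M/xM ∈ Add {Ω_{R/xR}^n k ∣ n ≥ 0}` as a module over `R/xR`. -/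
def InAddSyzygiesQuot (R : Type u) [CommRing R] [IsLocalRing R]
    (M : Type v) [AddCommGroup M] [Module R M] {x : R} (hx : x ∈ maximalIdeal R) : Prop :=
  letI := quotIsLocalRing R hx
  InAddSyzygies (R ⧸ Ideal.span {x}) (M ⧸ (Ideal.span {x} • ⊤ : Submodule R M))

/-- `Y ∈ Add K` : `Y` is a direct summand of a direct sum of copies of `K`. -/
def IsSummandOfCopies (R : Type u) [CommRing R] (Y : Type v) [AddCommGroup Y] [Module R Y]
    (K : Type v) [AddCommGroup K] [Module R K] : Prop :=
  ∃ (κ : Type v) (s : Y →ₗ[R] (κ →₀ K)) (r : (κ →₀ K) →ₗ[R] Y), r ∘ₗ s = LinearMap.id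

/-- `M` is a faithfully flat `R`-module: `M` is flat and tensoring with `M`
reflects the vanishing of modules. -/
def IsFaithfullyFlat (R : Type u) [CommRing R] (M : Type v) [AddCommGroup M]
    [Module R M] : Prop :=
  Module.Flat R M ∧
    ∀ N : ModuleAux.{u, v} R, Subsingleton (M ⊗[R] N.carrier) → Subsingleton N.carrier

/-- A system of parameters of a local ring `R` : `dim R` elements of the maximal ideal
generating an `𝔪`-primary ideal. -/
def IsSOP (R : Type u) [CommRing R] [IsLocalRing R] {d : ℕ} (x : Fin d → R) : Prop :=
  (d : WithBot (WithTop ℕ)) = ringKrullDim R ∧ (∀ i, x i ∈ maximalIdeal R) ∧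
    (Ideal.span (Set.range x)).radical = maximalIdeal R

/-- `L` is a balanced big Cohen–Macaulay `R`-module: every system of parameters of `R`
is an `L`-regular sequence. -/
def IsBalancedBigCM (R : Type u) [CommRing R] [IsLocalRing R]
    (L : Type v) [AddCommGroup L] [Module R L] : Prop :=
  ∀ (d : ℕ) (x : Fin d → R), IsSOP R x → RingTheory.Sequence.IsRegular L (List.ofFn x)

/-- `L/xL` is a balanced big Cohen–Macaulay module over `R/xR`. -/
def IsBalancedBigCMQuot (R : Type u) [CommRing R] [IsLocalRing R]
    (L : Type v) [AddCommGroup L] [Module R L] {x : R} (hx : x ∈ maximalIdeal R) : Prop :=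
  letI := quotIsLocalRing R hx
  IsBalancedBigCM (R ⧸ Ideal.span {x}) (L ⧸ (Ideal.span {x} • ⊤ : Submodule R L))

/-- The depth of a module over a local ring: the supremum of the lengths of
`M`-regular sequences consisting of elements of the maximal ideal. -/
def moduleDepth (R : Type u) [CommRing R] [IsLocalRing R]
    (M : Type v) [AddCommGroup M] [Module R M] : ℕ∞ :=
  sSup {n : ℕ∞ | ∃ (d : ℕ) (x : Fin d → R), n = d ∧ (∀ i, x i ∈ maximalIdeal R) ∧
    RingTheory.Sequence.IsRegular M (List.ofFn x)}

/-- `K` is a deep module: `depth K ≥ depth R`. -/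
def IsDeep (R : Type u) [CommRing R] [IsLocalRing R]
    (K : Type v) [AddCommGroup K] [Module R K] : Prop :=
  moduleDepth R R ≤ moduleDepth R K

/-- `K/xK` is a deep module over `R/xR`. -/
def IsDeepQuot (R : Type u) [CommRing R] [IsLocalRing R]
    (K : Type v) [AddCommGroup K] [Module R K] {x : R} (hx : x ∈ maximalIdeal R) : Prop :=
  letI := quotIsLocalRing R hx
  IsDeep (R ⧸ Ideal.span {x}) (K ⧸ (Ideal.span {x} • ⊤ : Submodule R K))

/-- `L/xL ∈ Add (K/xK)` over `R/xR`. -/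
def IsSummandOfCopiesQuot (R : Type u) [CommRing R] [IsLocalRing R]
    (Y : Type v) [AddCommGroup Y] [Module R Y] (K : Type v) [AddCommGroup K] [Module R K]
    {x : R} (hx : x ∈ maximalIdeal R) : Prop :=
  IsSummandOfCopies (R ⧸ Ideal.span {x}) (Y ⧸ (Ideal.span {x} • ⊤ : Submodule R Y))
    (K ⧸ (Ideal.span {x} • ⊤ : Submodule R K))

/-- The map `M/IM → N/IN` induced by an `R`-linear map `f : M → N`. -/
def quotMapByIdeal {R : Type u} [CommRing R] (I : Ideal R) {M N : Type v}
    [AddCommGroup M] [Module R M] [AddCommGroup N] [Module R N] (f : M →ₗ[R] N) :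
    (M ⧸ (I • ⊤ : Submodule R M)) →ₗ[R] N ⧸ (I • ⊤ : Submodule R N) :=
  Submodule.mapQ _ _ f (Submodule.smul_top_le_comap_smul_top I f)

end

lemma socle_le_maximalIdeal_aux (R : Type u) [CommRing R] [IsLocalRing R]
    (hm : maximalIdeal R ≠ ⊥) : Socle R ≤ maximalIdeal R := by
  intro a ha
  by_contra h
  have hu : IsUnit a := by
    by_contra hu
    exact h hu
  apply hm
  ext m
  simp only [Ideal.mem_bot, Submodule.mem_bot]
  constructor
  · intro hmm
    have h0 : a * m = 0 := by
      have := Submodule.mem_annihilator.mp ha m hmm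
      simpa using this
    obtain ⟨u, rfl⟩ := hu
    calc m = (↑u⁻¹ : R) * (↑u * m) := by
            rw [← mul_assoc, Units.inv_mul, one_mul]
      _ = 0 := by rw [h0, mul_zero]
  · rintro rfl; exact Submodule.zero_mem _

lemma syzygy_smul_eq_zero (R : Type u) [CommRing R] [IsLocalRing R]
    (hm : maximalIdeal R ≠ ⊥) (n : ℕ) (N : Type v) [AddCommGroup N] [Module R N]
    (h : IsSyzygy R n N) {a : R} (ha : a ∈ Socle R) (x : N) : a • x = 0 := by
  have ham : a ∈ maximalIdeal R := socle_le_maximalIdeal_aux R hm ha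
  cases n with
  | zero =>
    obtain ⟨e⟩ := h
    rw [← (LinearEquiv.map_eq_zero_iff e), map_smul]
    obtain ⟨r, hr⟩ := IsLocalRing.residue_surjective (R := R) (e x)
    rw [← hr]
    have : a • IsLocalRing.residue R r = IsLocalRing.residue R (a * r) := by
      rw [map_mul]
      rw [Algebra.smul_def]
      rfl
    rw [this]
    exact Ideal.Quotient.eq_zero_iff_mem.mpr (Ideal.mul_mem_right r _ ham)
  | succ n =>
    obtain ⟨F, S, _, _, hS, _, ⟨e⟩⟩ := h
    rw [← (LinearEquiv.map_eq_zero_iff e), map_smul]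
    have hmem : (e x : F.carrier) ∈ (maximalIdeal R • ⊤ : Submodule R F.carrier) :=
      hS (e x).2
    have key : a • (e x : F.carrier) = 0 := by
      refine Submodule.smul_induction_on hmem ?_ ?_
      · intro m hmm f _
        rw [smul_smul]
        have hzero : a * m = 0 := by
          have := Submodule.mem_annihilator.mp ha m hmm
          simpa using this
        rw [hzero, zero_smul]
      · intro y z hy hz
        rw [smul_add, hy, hz, add_zero]
    exact Subtype.ext (by simpa using key)

/-- **Theorem (Statement 10).** Over a noetherian local ring of depth zero which is not
a field, every module in `Add {Ω_R^n k ∣ n ≥ 0}` is annihilated by the socle. -/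
theorem socle_le_annihilator_of_inAddSyzygies
    (R : Type u) [CommRing R] [IsNoetherianRing R] [IsLocalRing R]
    (h0 : DepthZero R) (hm : maximalIdeal R ≠ ⊥)
    (M : Type v) [AddCommGroup M] [Module R M] (hM : InAddSyzygies R M) :
    Socle R ≤ Module.annihilator R M := by
  obtain ⟨ι, n, Z, hZ, κ, g, s, r, hrs⟩ := hM
  intro a ha
  rw [Module.mem_annihilator]
  intro m
  have hx : ∀ x : ⨁ k : κ, (Z (g k)).carrier, a • x = 0 := by
    intro x
    refine DFinsupp.ext fun i => ?_
    simp only [DirectSum.smul_apply, DirectSum.zero_apply]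
    exact syzygy_smul_eq_zero R hm (n (g i)) _ (hZ (g i)) ha _
  have hm' : r (s m) = m := LinearMap.congr_fun hrs m
  calc a • m = a • r (s m) := by rw [hm']
    _ = r (a • s m) := (map_smul r a (s m)).symm
    _ = 0 := by rw [hx (s m), map_zero]
end

section
/- Let R be a commutative noetherian local ring and let X, Y be R-modules. If X ≼'_R Y and Y ∈ 𝒫_{A'}(R), then X ∈ 𝒫_{A'}(R). -/
/-!
Common definitions for formalizing (A)-, (B)-properties and (C)-relations
(Kosaka, "Characterizing regular local rings via analogues of (*)-properties").
-/

universe u v w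

open IsLocalRing DirectSum TensorProduct

/-- **Theorem (Statement 13).** If `X ≼'_R Y` and `Y ∈ 𝒫_{A'}(R)`, then `X ∈ 𝒫_{A'}(R)`. -/
theorem memPA'_of_preceq'
    (R : Type u) [CommRing R] [IsNoetherianRing R] [IsLocalRing R]
    (X : Type v) [AddCommGroup X] [Module R X]
    (Y : Type v) [AddCommGroup Y] [Module R Y]
    (hXY : Preceq' R X Y) (hY : MemPA' R Y) : MemPA' R X := by
  obtain ⟨rel, ⟨hR1, hR2⟩, hrel⟩ := hXY
  obtain ⟨P, ⟨hP1, hP2⟩, hPY⟩ := hY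
  refine ⟨fun S _ _ _ M _ _ => ∃ N : ModuleAux.{u, v} S, rel S M N.carrier ∧ P S N.carrier,
    ⟨?_, ?_⟩, ⟨⟨Y⟩, hrel, hPY⟩⟩
  · intro S _ _ _ M _ _ hd hQ
    obtain ⟨N, hMN, hPN⟩ := hQ
    obtain ⟨s1, hs1, h1⟩ := hR1 S M N.carrier hd hMN
    obtain ⟨s2, hs2, h2⟩ := hP1 S N.carrier hd hPN
    classical
    refine ⟨s1 ∪ s2, ?_, ?_⟩
    · intro p hp
      rcases Finset.mem_union.mp hp with h | h
      exacts [hs1 p h, hs2 p h]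
    · intro x hx hx2 hxs hxreg
      exact ⟨⟨N.carrier ⧸ (Ideal.span {x} • ⊤ : Submodule S N.carrier)⟩,
        h1 x hx hx2 (fun p hp => hxs p (Finset.mem_union_left _ hp)) hxreg,
        h2 x hx hx2 (fun p hp => hxs p (Finset.mem_union_right _ hp)) hxreg⟩
  · intro S _ _ _ M _ _ hd hQ hsoc
    obtain ⟨N, hMN, hPN⟩ := hQ
    exact hP2 S N.carrier hd hPN (le_trans hsoc (hR2 S M N.carrier hd hMN))
end

section
/- Let R be a commutative noetherian local ring and let X, Y be R-modules. If X ≼'_R Y and X ∈ 𝒫_{B'}(R), then Y ∈ 𝒫_{B'}(R). -/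
/-!
Common definitions for formalizing (A)-, (B)-properties and (C)-relations
(Kosaka, "Characterizing regular local rings via analogues of (*)-properties").
-/

universe u v w

open IsLocalRing DirectSum TensorProduct

/-- **Theorem (Statement 14).** If `X ≼'_R Y` and `X ∈ 𝒫_{B'}(R)`, then `Y ∈ 𝒫_{B'}(R)`. -/
theorem memPB'_of_preceq'
    (R : Type u) [CommRing R] [IsNoetherianRing R] [IsLocalRing R]
    (X : Type v) [AddCommGroup X] [Module R X]
    (Y : Type v) [AddCommGroup Y] [Module R Y]
    (hXY : Preceq' R X Y) (hX : MemPB' R X) : MemPB' R Y := by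
  obtain ⟨rel, ⟨hR1, hR2⟩, hrel⟩ := hXY
  obtain ⟨P, ⟨hP1, hP3⟩, hPX⟩ := hX
  refine ⟨fun R' _ _ _ N _ _ =>
      ∃ M : ModuleAux.{u, v} R', P R' M.carrier ∧ rel R' M.carrier N,
    ⟨?_, ?_⟩, ⟨X⟩, hPX, hrel⟩
  · intro R' _ _ _ N _ _ hd hQ
    classical
    obtain ⟨M, hPM, hrelMN⟩ := hQ
    obtain ⟨s1, hs1, h1⟩ := hP1 R' M.carrier hd hPM
    obtain ⟨s2, hs2, h2⟩ := hR1 R' M.carrier N hd hrelMN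
    refine ⟨s1 ∪ s2, ?_, ?_⟩
    · intro p hp
      rcases Finset.mem_union.mp hp with h | h
      · exact hs1 p h
      · exact hs2 p h
    · intro x hx hx2 hxs hreg
      exact ⟨⟨M.carrier ⧸ (Ideal.span {x} • ⊤ : Submodule R' M.carrier)⟩,
        h1 x hx hx2 (fun p hp => hxs p (Finset.mem_union_left _ hp)) hreg,
        h2 x hx hx2 (fun p hp => hxs p (Finset.mem_union_right _ hp)) hreg⟩
  · intro R' _ _ _ N _ _ hd hQ hm
    obtain ⟨M, hPM, hrelMN⟩ := hQ
    exact le_trans (hP3 R' M.carrier hd hPM hm) (hR2 R' M.carrier N hd hrelMN)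
end

section
/- Let R be a commutative noetherian local ring and let X, Y, Z be R-modules. If X ≼'_R Y and Y ≼'_R Z, then X ≼'_R Z. -/
/-!
Common definitions for formalizing (A)-, (B)-properties and (C)-relations
(Kosaka, "Characterizing regular local rings via analogues of (*)-properties").
-/

universe u v w

open IsLocalRing DirectSum TensorProduct

/-- **Theorem (Statement 15).** The relation `≼'` is transitive. -/
theorem preceq'_trans
    (R : Type u) [CommRing R] [IsNoetherianRing R] [IsLocalRing R]
    (X : Type v) [AddCommGroup X] [Module R X]
    (Y : Type v) [AddCommGroup Y] [Module R Y]
    (Z : Type v) [AddCommGroup Z] [Module R Z]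
    (hXY : Preceq' R X Y) (hYZ : Preceq' R Y Z) : Preceq' R X Z := by
  obtain ⟨r1, ⟨h11, h12⟩, hr1⟩ := hXY
  obtain ⟨r2, ⟨h21, h22⟩, hr2⟩ := hYZ
  refine ⟨fun S _ _ _ M _ _ N _ _ =>
      ∃ K : ModuleAux.{u, v} S, r1 S M K.carrier ∧ r2 S K.carrier N, ⟨?_, ?_⟩, ⟨Y⟩, hr1, hr2⟩
  · rintro S _ _ _ M _ _ N _ _ hd ⟨K, hK1, hK2⟩
    classical
    obtain ⟨s1, hs1, hq1⟩ := h11 S M K.carrier hd hK1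
    obtain ⟨s2, hs2, hq2⟩ := h21 S K.carrier N hd hK2
    refine ⟨s1 ∪ s2, ?_, ?_⟩
    · intro p hp
      rcases Finset.mem_union.mp hp with h | h
      exacts [hs1 p h, hs2 p h]
    · intro x hx hx2 hxp hxreg
      exact ⟨⟨K.carrier ⧸ (Ideal.span {x} • ⊤ : Submodule S K.carrier)⟩,
        hq1 x hx hx2 (fun p hp => hxp p (Finset.mem_union_left _ hp)) hxreg,
        hq2 x hx hx2 (fun p hp => hxp p (Finset.mem_union_right _ hp)) hxreg⟩
  · rintro S _ _ _ M _ _ N _ _ hd ⟨K, hK1, hK2⟩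
    exact le_trans (h12 S M K.carrier hd hK1) (h22 S K.carrier N hd hK2)
end

section
/- Let R be a commutative noetherian local ring, X an R-module, and {X_i}_{i∈I} a family of R-modules with I a finite index set. If X ≼'_R X_i for every i ∈ I and Y is an R-module belonging to Add{X_i | i ∈ I}, then X ≼'_R Y. -/
/-!
Common definitions for formalizing (A)-, (B)-properties and (C)-relations
(Kosaka, "Characterizing regular local rings via analogues of (*)-properties").
-/

universe u v w

open IsLocalRing DirectSum TensorProduct

noncomputable section AuxProofs

open DirectSum

variable {R : Type u} [CommRing R]

/-- Extend an `R`-linear map to an `R⧸I`-linear map when both module structures are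
compatible with the `R`-action. -/
def extendQuotScalars (I : Ideal R) {M N : Type v}
    [AddCommGroup M] [Module R M] [Module (R ⧸ I) M]
    [AddCommGroup N] [Module R N] [Module (R ⧸ I) N]
    (hM : ∀ (c : R) (m : M), (Ideal.Quotient.mk I c) • m = c • m)
    (hN : ∀ (c : R) (m : N), (Ideal.Quotient.mk I c) • m = c • m)
    (f : M →ₗ[R] N) : M →ₗ[R ⧸ I] N where
  toFun := f
  map_add' := f.map_add
  map_smul' c m := by
    obtain ⟨a, rfl⟩ := Ideal.Quotient.mk_surjective c
    simp only [RingHom.id_apply, hM, hN, map_smul]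

theorem quot_mk_smul (I : Ideal R) {M : Type v} [AddCommGroup M] [Module R M]
    (c : R) (m : M ⧸ (I • ⊤ : Submodule R M)) :
    (Ideal.Quotient.mk I c) • m = c • m := by
  obtain ⟨a, rfl⟩ := Submodule.Quotient.mk_surjective _ m
  rw [Module.Quotient.mk_smul_mk, ← Submodule.Quotient.mk_smul]

theorem directSum_mk_smul (I : Ideal R) {κ : Type v} (A : κ → Type v)
    [∀ k, AddCommGroup (A k)] [∀ k, Module R (A k)]
    (c : R) (v : ⨁ k, (A k ⧸ (I • ⊤ : Submodule R (A k)))) :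
    (Ideal.Quotient.mk I c) • v = c • v := by
  refine DFinsupp.ext fun k => ?_
  rw [DFinsupp.smul_apply, DFinsupp.smul_apply, quot_mk_smul]

/-- Transport of `Add` membership along a factorization of families. -/
theorem isAddIn_of_comp_eq {Y : Type v} [AddCommGroup Y] [Module R Y]
    {ι₁ : Type*} {ι₂ : Type*} {G₁ : ι₁ → ModuleAux.{u, v} R}
    {G₂ : ι₂ → ModuleAux.{u, v} R} (h : ι₁ → ι₂) (hh : G₂ ∘ h = G₁)
    (hY : IsAddIn R Y G₁) : IsAddIn R Y G₂ := by
  subst hh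
  obtain ⟨κ, g, s, r, hrs⟩ := hY
  exact ⟨κ, fun k => h (g k), s, r, hrs⟩

/-- `Add` membership passes to quotients by an ideal `I`. -/
theorem IsAddIn.quotient (I : Ideal R) {Y : Type v} [AddCommGroup Y] [Module R Y]
    {ι' : Type w} (G : ι' → ModuleAux.{u, v} R) (h : IsAddIn R Y G) :
    IsAddIn (R ⧸ I) (Y ⧸ (I • ⊤ : Submodule R Y))
      (fun i => ModuleAux.mk ((G i).carrier ⧸ (I • ⊤ : Submodule R (G i).carrier))) := by
  classical
  obtain ⟨κ, g, s, r, hrs⟩ := h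
  set A : κ → Type v := fun k => (G (g k)).carrier with hA
  let D' := ⨁ k, (A k ⧸ (I • ⊤ : Submodule R (A k)))
  let π : (⨁ k, A k) →ₗ[R] D' :=
    DirectSum.toModule R κ D' fun k =>
      (DirectSum.lof R κ (fun k => A k ⧸ (I • ⊤ : Submodule R (A k))) k) ∘ₗ
        (I • ⊤ : Submodule R (A k)).mkQ
  have hD' : ∀ c ∈ I, ∀ v : D', c • v = 0 := by
    intro c hc v
    refine DFinsupp.ext fun k => ?_
    obtain ⟨a, ha⟩ := Submodule.Quotient.mk_surjective _ (v k)
    rw [DFinsupp.zero_apply, DFinsupp.smul_apply, ← ha, ← Submodule.Quotient.mk_smul,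
      Submodule.Quotient.mk_eq_zero]
    exact Submodule.smul_mem_smul hc trivial
  have hDbot : (I • ⊤ : Submodule R D') = ⊥ := by
    rw [eq_bot_iff]
    refine Submodule.smul_le.mpr fun c hc m _ => ?_
    rw [Submodule.mem_bot]
    exact hD' c hc m
  let s₀ : (Y ⧸ (I • ⊤ : Submodule R Y)) →ₗ[R] D' :=
    Submodule.liftQ _ (π ∘ₗ s) (by
      intro y hy
      rw [LinearMap.mem_ker]
      have := Submodule.smul_top_le_comap_smul_top I (π ∘ₗ s) hy
      rw [Submodule.mem_comap, hDbot, Submodule.mem_bot] at this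
      exact this)
  let r₀ : D' →ₗ[R] Y ⧸ (I • ⊤ : Submodule R Y) :=
    DirectSum.toModule R κ _ fun k =>
      Submodule.liftQ _ ((I • ⊤ : Submodule R Y).mkQ ∘ₗ r ∘ₗ DirectSum.lof R κ A k) (by
        intro a ha
        rw [LinearMap.mem_ker]
        have := Submodule.smul_top_le_comap_smul_top I (r ∘ₗ DirectSum.lof R κ A k) ha
        rw [Submodule.mem_comap] at this
        simpa [Submodule.Quotient.mk_eq_zero] using this)
  have hkey : r₀ ∘ₗ π = (I • ⊤ : Submodule R Y).mkQ ∘ₗ r := by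
    refine DirectSum.linearMap_ext R fun k => ?_
    ext a
    simp only [LinearMap.comp_apply, Submodule.mkQ_apply]
    rw [DirectSum.toModule_lof]
    simp only [LinearMap.comp_apply, Submodule.mkQ_apply]
    erw [DirectSum.toModule_lof]
    rw [Submodule.liftQ_apply]
    simp only [LinearMap.comp_apply, Submodule.mkQ_apply]
  have hcomp : r₀ ∘ₗ s₀ = LinearMap.id := by
    ext y
    have h1 : s₀ (Submodule.Quotient.mk y) = π (s y) := rfl
    have h2 := LinearMap.congr_fun hkey (s y)
    have h3 := LinearMap.congr_fun hrs y
    simp only [LinearMap.comp_apply] at h2 h3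
    simp only [LinearMap.id_apply, LinearMap.comp_apply, Submodule.mkQ_apply, h1, h2, h3]
  exact ⟨κ, g,
    extendQuotScalars I (quot_mk_smul I) (directSum_mk_smul I A) s₀,
    extendQuotScalars I (directSum_mk_smul I A) (quot_mk_smul I) r₀,
    LinearMap.ext fun y => LinearMap.congr_fun hcomp y⟩

/-- The relation "`N ∈ Add` of a finite family each member of which dominates `M`". -/
def relAdd : ModuleRelation.{u, v} :=
  fun R _ _ _ M _ _ N _ _ =>
    ∃ (n : ℕ) (G : Fin n → ModuleAux.{u, v} R),
      (∀ i, Preceq' R M (G i).carrier) ∧ IsAddIn R N G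

theorem relAdd_satR2 : ModuleRelation.SatR2 relAdd.{u, v} := by
  intro R _ _ _ M _ _ N _ _ hdepth hrel
  obtain ⟨n, G, hPre, κ, g, s, r, hrs⟩ := hrel
  intro a ha
  rw [Module.mem_annihilator]
  intro m
  have hann : ∀ i, a ∈ Module.annihilator R (G i).carrier := by
    intro i
    obtain ⟨rel, hC, hr⟩ := hPre i
    exact hC.2 R M (G i).carrier hdepth hr ha
  have hsv : a • s m = 0 := by
    refine DFinsupp.ext fun k => ?_
    rw [DFinsupp.smul_apply]
    exact Module.mem_annihilator.mp (hann (g k)) _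
  have : a • m = a • r (s m) := by
    rw [show r (s m) = m from LinearMap.congr_fun hrs m]
  rw [this, ← map_smul, hsv, map_zero]

theorem relAdd_satR1' : ModuleRelation.SatR1' relAdd.{u, v} := by
  classical
  intro R _ _ _ M _ _ N _ _ hdepth hrel
  obtain ⟨n, G, hPre, hAdd⟩ := hrel
  choose rel hC hr using hPre
  have h := fun i => (hC i).1 R M (G i).carrier hdepth (hr i)
  choose s hs hq using h
  refine ⟨Finset.univ.biUnion s, ?_, ?_⟩
  · intro p hp
    obtain ⟨i, _, hpi⟩ := Finset.mem_biUnion.mp hp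
    exact hs i p hpi
  · intro x hx hx2 hxs hreg
    letI := quotIsLocalRing R hx
    show relAdd (R ⧸ Ideal.span {x}) (M ⧸ (Ideal.span {x} • ⊤ : Submodule R M))
      (N ⧸ (Ideal.span {x} • ⊤ : Submodule R N))
    refine ⟨n, fun i => ModuleAux.mk ((G i).carrier ⧸
      (Ideal.span {x} • ⊤ : Submodule R (G i).carrier)), fun i => ?_, ?_⟩
    · exact ⟨rel i, hC i, hq i x hx hx2
        (fun p hp => hxs p (Finset.mem_biUnion.mpr ⟨i, Finset.mem_univ i, hp⟩)) hreg⟩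
    · exact IsAddIn.quotient (Ideal.span {x}) G hAdd

end AuxProofs

/-- **Theorem (Statement 18).** If `I` is finite, `X ≼'_R Xᵢ` for all `i ∈ I`, and
`Y ∈ Add {Xᵢ ∣ i ∈ I}`, then `X ≼'_R Y`. -/
theorem preceq'_of_isAddIn
    (R : Type u) [CommRing R] [IsNoetherianRing R] [IsLocalRing R]
    (X : Type v) [AddCommGroup X] [Module R X]
    (ι : Type w) [Finite ι] (F : ι → ModuleAux.{u, v} R)
    (hX : ∀ i : ι, Preceq' R X (F i).carrier)
    (Y : Type v) [AddCommGroup Y] [Module R Y] (hY : IsAddIn R Y F) :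
    Preceq' R X Y := by
  obtain ⟨n, ⟨e⟩⟩ := Finite.exists_equiv_fin ι
  refine ⟨relAdd, ⟨relAdd_satR1', relAdd_satR2⟩, n, fun i => F (e.symm i),
    fun i => hX _, ?_⟩
  exact isAddIn_of_comp_eq (G₁ := F) (⇑e)
    (funext fun i => congrArg F (e.symm_apply_apply i)) hY
end

section
/- Let R be a commutative noetherian local ring, X an R-module, and {X_i}_{i∈I} a family of R-modules (I an arbitrary index set). If X ≼_R X_i for every i ∈ I and Y is an R-module belonging to Add{X_i | i ∈ I}, then X ≼_R Y. -/
/-!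
Common definitions for formalizing (A)-, (B)-properties and (C)-relations
(Kosaka, "Characterizing regular local rings via analogues of (*)-properties").
-/

universe u v w

open IsLocalRing DirectSum TensorProduct

section AddRelAux

/-- `I` annihilates `P`. -/
def KilledBy {R : Type u} [CommRing R] (I : Ideal R) (P : Type v)
    [AddCommGroup P] [Module R P] : Prop :=
  ∀ a ∈ I, ∀ m : P, a • m = 0

theorem killedBy_quot {R : Type u} [CommRing R] (I : Ideal R) (M : Type v)
    [AddCommGroup M] [Module R M] :
    KilledBy I (M ⧸ (I • ⊤ : Submodule R M)) := by
  intro a ha m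
  obtain ⟨m, rfl⟩ := Submodule.Quotient.mk_surjective _ m
  rw [← Submodule.Quotient.mk_smul, Submodule.Quotient.mk_eq_zero]
  exact Submodule.smul_mem_smul ha trivial

theorem killedBy_directSum {R : Type u} [CommRing R] (I : Ideal R) {κ : Type v}
    (P : κ → Type v) [∀ k, AddCommGroup (P k)] [∀ k, Module R (P k)]
    (h : ∀ k, KilledBy I (P k)) : KilledBy I (⨁ k, P k) := by
  intro a ha z
  refine DFinsupp.ext fun k => ?_
  simpa [DirectSum.smul_apply] using h k a ha (z k)

theorem smul_top_le_ker {R : Type u} [CommRing R] {I : Ideal R} {M : Type v} {P : Type v}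
    [AddCommGroup M] [Module R M] [AddCommGroup P] [Module R P]
    (hP : KilledBy I P) (f : M →ₗ[R] P) :
    (I • ⊤ : Submodule R M) ≤ LinearMap.ker f :=
  Submodule.smul_le.2 fun r hr n _ => by
    simp [LinearMap.mem_ker, map_smul, hP r hr]

theorem Preceq.quotStep {R : Type u} [CommRing R] [IsNoetherianRing R] [IsLocalRing R]
    {M N : Type v} [AddCommGroup M] [Module R M] [AddCommGroup N] [Module R N]
    (h : Preceq R M N) {x : R} (hx : x ∈ maximalIdeal R) (h2 : x ∉ maximalIdeal R ^ 2)
    (h3 : x ∈ nonZeroDivisors R) :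
    letI := quotIsLocalRing R hx
    Preceq (R ⧸ Ideal.span {x}) (M ⧸ (Ideal.span {x} • ⊤ : Submodule R M))
      (N ⧸ (Ideal.span {x} • ⊤ : Submodule R N)) := by
  obtain ⟨rel, hC, hrel⟩ := h
  exact ⟨rel, hC, hC.1 R M N hrel x hx h2 h3⟩

theorem Preceq.annStep {R : Type u} [CommRing R] [IsNoetherianRing R] [IsLocalRing R]
    {M N : Type v} [AddCommGroup M] [Module R M] [AddCommGroup N] [Module R N]
    (hd : DepthZero R) (h : Preceq R M N) :
    Module.annihilator R M ≤ Module.annihilator R N := by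
  obtain ⟨rel, hC, hrel⟩ := h
  exact hC.2 R M N hd hrel

/-- The auxiliary relation: `M ≤ N` iff `N` is a direct summand of a direct sum of a
family of modules each of which is `≽ M` (w.r.t. `≼`). -/
def addRel : ModuleRelation.{u, v} :=
  fun R _ _ _ M _ _ N _ _ =>
    ∃ (κ : Type v) (G : κ → ModuleAux.{u, v} R),
      (∀ k, Preceq R M (G k).carrier) ∧
      ∃ (s : N →ₗ[R] ⨁ k, (G k).carrier) (r : (⨁ k, (G k).carrier) →ₗ[R] N),
        r ∘ₗ s = LinearMap.id

theorem addRel_isCRelation : IsCRelation addRel.{u, v} := by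
  constructor
  · -- (R1)
    intro R _ _ _ M _ _ N _ _ h x hx h2 h3
    obtain ⟨κ, G, hG, s, r, hrs⟩ := h
    classical
    letI := quotIsLocalRing R hx
    set I : Ideal R := Ideal.span {x} with hI
    -- the quotient family
    let G' : κ → ModuleAux.{u, v} (R ⧸ I) :=
      fun k => ⟨(G k).carrier ⧸ (I • ⊤ : Submodule R (G k).carrier)⟩
    have hkill : KilledBy I (⨁ k, (G' k).carrier) :=
      killedBy_directSum I _ (fun k => killedBy_quot I (G k).carrier)
    -- the map ⨁ Gₖ → ⨁ Gₖ/IGₖ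
    let sbar : (⨁ k, (G k).carrier) →ₗ[R] ⨁ k, (G' k).carrier :=
      DirectSum.toModule R κ _ (fun k =>
        (DirectSum.lof R κ (fun k => (G' k).carrier) k) ∘ₗ
          Submodule.mkQ (I • ⊤ : Submodule R (G k).carrier))
    let s' : (N ⧸ (I • ⊤ : Submodule R N)) →ₗ[R] ⨁ k, (G' k).carrier :=
      Submodule.liftQ _ (sbar ∘ₗ s) (smul_top_le_ker hkill _)
    let r' : (⨁ k, (G' k).carrier) →ₗ[R] N ⧸ (I • ⊤ : Submodule R N) :=
      DirectSum.toModule R κ _ (fun k =>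
        Submodule.liftQ _
          ((Submodule.mkQ (I • ⊤ : Submodule R N)) ∘ₗ r ∘ₗ
            DirectSum.lof R κ (fun k => (G k).carrier) k)
          (smul_top_le_ker (killedBy_quot I N) _))
    have key : r' ∘ₗ sbar =
        (Submodule.mkQ (I • ⊤ : Submodule R N)) ∘ₗ r := by
      refine DirectSum.linearMap_ext _ (fun k => ?_)
      ext g
      simp [sbar, r', DirectSum.toModule_lof]
      rfl
    have hid : r' ∘ₗ s' = LinearMap.id := by
      refine Submodule.linearMap_qext _ ?_
      ext n
      have := LinearMap.congr_fun key (s n)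
      simp only [LinearMap.comp_apply, Submodule.mkQ_apply] at this ⊢
      rw [Submodule.liftQ_apply]
      simp only [LinearMap.comp_apply]
      rw [this]
      congr 1
      exact LinearMap.congr_fun hrs n
    have hsurj : Function.Surjective (algebraMap R (R ⧸ I)) :=
      Ideal.Quotient.mk_surjective
    have hid2 : (r'.extendScalarsOfSurjective hsurj) ∘ₗ
        (s'.extendScalarsOfSurjective hsurj) = LinearMap.id :=
      LinearMap.ext fun n => LinearMap.congr_fun hid n
    exact ⟨κ, G', fun k => Preceq.quotStep (hG k) hx h2 h3,
      s'.extendScalarsOfSurjective hsurj, r'.extendScalarsOfSurjective hsurj, hid2⟩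
  · -- (R2)
    intro R _ _ _ M _ _ N _ _ hd h
    obtain ⟨κ, G, hG, s, r, hrs⟩ := h
    intro a ha
    rw [Module.mem_annihilator]
    intro n
    have hz : a • s n = 0 := by
      refine DFinsupp.ext fun k => ?_
      have hk : a ∈ Module.annihilator R (G k).carrier := Preceq.annStep hd (hG k) ha
      simpa [DirectSum.smul_apply] using Module.mem_annihilator.mp hk ((s n) k)
    have hn : r (s n) = n := LinearMap.congr_fun hrs n
    calc a • n = a • r (s n) := by rw [hn]
      _ = r (a • s n) := (map_smul r a (s n)).symm
      _ = 0 := by rw [hz, map_zero]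

end AddRelAux

/-- **Theorem (Statement 19).** If `X ≼_R Xᵢ` for all `i ∈ I` (an arbitrary index set)
and `Y ∈ Add {Xᵢ ∣ i ∈ I}`, then `X ≼_R Y`. -/
theorem preceq_of_isAddIn
    (R : Type u) [CommRing R] [IsNoetherianRing R] [IsLocalRing R]
    (X : Type v) [AddCommGroup X] [Module R X]
    (ι : Type w) (F : ι → ModuleAux.{u, v} R)
    (hX : ∀ i : ι, Preceq R X (F i).carrier)
    (Y : Type v) [AddCommGroup Y] [Module R Y] (hY : IsAddIn R Y F) :
    Preceq R X Y := by
  obtain ⟨κ, g, s, r, hrs⟩ := hY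
  exact ⟨addRel, addRel_isCRelation, κ, fun k => F (g k), fun k => hX (g k), s, r, hrs⟩
end
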